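/- Assume κ is UD-self-dual and 𝗊 : P → ℝ_{>0} is such that 𝗊² satisfies the Kerov condition with a parameter t > 0; fix ξ ∈ (0,1). Then for every μ ∈ 𝔾 the family (P*_μ(λ) M_ξ(λ))_{λ∈𝔾} is summable and Σ_{λ∈𝔾} P*_μ(λ) M_ξ(λ) = (ξ/(1−ξ))^{|μ|} · (∏_{□∈μ} 𝗊(□)²) · dim μ / |μ|!. -/

import Mathlib

open scoped BigOperators Classical

namespace IdealGraph

variable {P : Type*} [PartialOrder P]

/-- A finite order ideal of the poset `P`, encoded as a down-closed `Finset`. -/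
def IsIdealF (s : Finset P) : Prop := ∀ ⦃x⦄, x ∈ s → ∀ ⦃y⦄, y ≤ x → y ∈ s

/-- The vertex set of the branching graph of ideals `𝔾 = J(P)`. -/
abbrev G (P : Type*) [PartialOrder P] := {s : Finset P // IsIdealF s}

/-- The `n`-th level `𝔾_n` of the branching graph. -/
abbrev Lvl (P : Type*) [PartialOrder P] (n : ℕ) := {s : Finset P // IsIdealF s ∧ s.card = n}

/-- `CoversF μ l` : `μ ↗ l` is an edge of the branching graph of ideals. -/
def CoversF (μ l : Finset P) : Prop :=
  IsIdealF μ ∧ IsIdealF l ∧ μ ⊆ l ∧ l.card = μ.card + 1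

/-- All levels `𝔾_n` of the graph are finite. -/
def LevelsFinite (P : Type*) [PartialOrder P] : Prop :=
  ∀ n : ℕ, {s : Finset P | IsIdealF s ∧ s.card = n}.Finite

/-- An edge multiplicity function is (strictly) positive on all edges. -/
def EdgePositive (κ : Finset P → Finset P → ℝ) : Prop :=
  ∀ μ l, CoversF μ l → 0 < κ μ l

/-- UD-self-duality of a multiplicity function: for every quadrangle `μ ρ ν λ`. -/
def UDSelfDual (κ : Finset P → Finset P → ℝ) : Prop :=
  ∀ μ ρ l ν : Finset P, CoversF μ ρ → CoversF ρ ν → CoversF μ l → CoversF l ν →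
    ρ ≠ l → κ μ l * κ μ ρ = κ l ν * κ ρ ν

/-- The value of a function `q : P → R` on the box `l ∖ μ` of an edge `μ ↗ l`. -/
noncomputable def bx {R : Type*} [AddCommMonoid R] (q : P → R) (μ l : Finset P) : R :=
  ∑ x ∈ l \ μ, q x

/-- The Kerov condition with parameter `t` for the function `q2 = 𝗊²`. -/
def KerovCond (κ : Finset P → Finset P → ℝ) (q2 : P → ℂ) (t : ℂ) : Prop :=
  ∀ l : Finset P, IsIdealF l →
    (∑' ν : {ν : Finset P // CoversF l ν}, (κ l ν.1 : ℂ) ^ 2 * bx q2 l ν.1) -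
      (∑' μ : {μ : Finset P // CoversF μ l}, (κ μ.1 l : ℂ) ^ 2 * bx q2 μ.1 l)
      = 2 * (l.card : ℂ) + t

/-- Weighted number of saturated chains of length `n` from the ideal `μ` up to the ideal `l`. -/
noncomputable def dimRel (κ : Finset P → Finset P → ℝ) : ℕ → Finset P → Finset P → ℝ
  | 0, μ, l => if μ = l then 1 else 0
  | n + 1, μ, l =>
      ∑ x ∈ l, if CoversF (l.erase x) l ∧ μ ⊆ l.erase x
        then κ (l.erase x) l * dimRel κ n μ (l.erase x) else 0

/-- Relative dimension `dim(μ, l)`. -/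
noncomputable def dimI (κ : Finset P → Finset P → ℝ) (μ l : Finset P) : ℝ :=
  dimRel κ (l.card - μ.card) μ l

/-- Dimension `dim l = dim(∅, l)`. -/
noncomputable def dimT (κ : Finset P → Finset P → ℝ) (l : Finset P) : ℝ :=
  dimI κ ∅ l

/-- The relative dimension function `P*_μ`. -/
noncomputable def Pstar (κ : Finset P → Finset P → ℝ) (μ l : Finset P) : ℝ :=
  (l.card.descFactorial μ.card : ℝ) * dimI κ μ l / dimT κ l

/-- The mixed measure `M_ξ`. -/
noncomputable def Mxi (κ : Finset P → Finset P → ℝ) (q : P → ℝ) (t ξ : ℝ) (l : Finset P) : ℝ :=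
  (1 - ξ) ^ t * ξ ^ l.card * (dimT κ l / (Nat.factorial l.card : ℝ)) ^ 2 * ∏ x ∈ l, q x ^ 2

/-- The coherent measure `M_n(l)` (for `n = |l|`). -/
noncomputable def Mcoh (κ : Finset P → Finset P → ℝ) (q : P → ℝ) (t : ℝ) (l : Finset P) : ℝ :=
  dimT κ l ^ 2 * (∏ x ∈ l, q x ^ 2) /
    ((Nat.factorial l.card : ℝ) * Polynomial.eval t (ascPochhammer ℝ l.card))

/-- The jump rates `Q(l, ρ)` of the Markov jump dynamics. -/
noncomputable def Qrate (κ : Finset P → Finset P → ℝ) (q : P → ℝ) (t ξ : ℝ)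
    (l ρ : Finset P) : ℝ :=
  if CoversF ρ l then (1 - ξ)⁻¹ * l.card * (κ ρ l * dimT κ ρ / dimT κ l)
  else if CoversF l ρ then
    (1 - ξ)⁻¹ * (ξ * ((l.card : ℝ) + t)) *
      ((Mcoh κ q t ρ / Mcoh κ q t l) * (κ l ρ * dimT κ l / dimT κ ρ))
  else if ρ = l then -((1 - ξ)⁻¹ * ((l.card : ℝ) + ξ * ((l.card : ℝ) + t)))
  else 0

/-- The function `𝔐_l`. -/
noncomputable def Mfrak (κ : Finset P → Finset P → ℝ) (q : P → ℝ) (ξ : ℝ)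
    (l ν : Finset P) : ℝ :=
  ∑ μ ∈ l.powerset.filter (fun s => IsIdealF s),
    (ξ / (ξ - 1)) ^ (l.card - μ.card) *
      (dimI κ μ l / (Nat.factorial (l.card - μ.card) : ℝ)) *
      (∏ x ∈ l \ μ, q x ^ 2) * Pstar κ μ ν

/-- The operator `U` built from `κ` and `q`. -/
noncomputable def Uop (κ : Finset P → Finset P → ℝ) (q : P → ℂ) (f : Finset P → ℂ) :
    Finset P → ℂ :=
  fun l => ∑' μ : {μ : Finset P // CoversF μ l}, (κ μ.1 l : ℂ) * bx q μ.1 l * f μ.1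

/-- The operator `D` built from `κ` and `q`. -/
noncomputable def Dop (κ : Finset P → Finset P → ℝ) (q : P → ℂ) (f : Finset P → ℂ) :
    Finset P → ℂ :=
  fun l => ∑' ν : {ν : Finset P // CoversF l ν}, (κ l ν.1 : ℂ) * bx q l ν.1 * f ν.1

/-- The standard basis vector `δ_l`. -/
noncomputable def delta (l : Finset P) : Finset P → ℂ := fun ρ => if ρ = l then 1 else 0



/-! ### Auxiliary development -/

section Aux

variable {P : Type*} [PartialOrder P]

lemma isIdealF_empty : IsIdealF (∅ : Finset P) := fun x hx => absurd hx (Finset.notMem_empty x)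

lemma IsIdealF.union {s u : Finset P} (hs : IsIdealF s) (hu : IsIdealF u) :
    IsIdealF (s ∪ u) := by
  intro x hx y hy
  rw [Finset.mem_union] at hx ⊢
  rcases hx with h | h
  · exact Or.inl (hs h hy)
  · exact Or.inr (hu h hy)

lemma CoversF.box {μ l : Finset P} (h : CoversF μ l) :
    ∃ a, a ∉ μ ∧ l = insert a μ ∧ l \ μ = {a} := by
  obtain ⟨-, -, hsub, hcard⟩ := h
  have hc : (l \ μ).card = 1 := by rw [Finset.card_sdiff_of_subset hsub]; omega
  obtain ⟨a, ha⟩ := Finset.card_eq_one.mp hc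
  have haIn : a ∈ l \ μ := ha ▸ Finset.mem_singleton_self a
  have haμ : a ∉ μ := (Finset.mem_sdiff.mp haIn).2
  refine ⟨a, haμ, ?_, ha⟩
  apply Finset.Subset.antisymm
  · intro x hx
    by_cases hxμ : x ∈ μ
    · exact Finset.mem_insert_of_mem hxμ
    · have : x ∈ l \ μ := Finset.mem_sdiff.mpr ⟨hx, hxμ⟩
      rw [ha, Finset.mem_singleton] at this
      exact this ▸ Finset.mem_insert_self a μ
  · intro x hx
    rcases Finset.mem_insert.mp hx with rfl | hx
    · exact (Finset.mem_sdiff.mp haIn).1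
    · exact hsub hx

lemma sdiff_erase_eq {l : Finset P} {x : P} (hx : x ∈ l) : l \ l.erase x = {x} := by
  ext y
  simp only [Finset.mem_sdiff, Finset.mem_erase, Finset.mem_singleton, not_and]
  constructor
  · rintro ⟨hy, h⟩
    by_contra hne
    exact (h hne) hy
  · rintro rfl
    exact ⟨hx, fun h => absurd rfl h⟩

/-! ### dimRel basics -/

lemma dimRel_nonneg {κ : Finset P → Finset P → ℝ} (hκ : EdgePositive κ) :
    ∀ (n : ℕ) (μ l : Finset P), 0 ≤ dimRel κ n μ l
  | 0, μ, l => by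
    rw [dimRel]; split_ifs <;> norm_num
  | n + 1, μ, l => by
    rw [dimRel]
    refine Finset.sum_nonneg fun x _ => ?_
    split_ifs with h
    · exact mul_nonneg (hκ _ _ h.1).le (dimRel_nonneg hκ n μ _)
    · exact le_rfl

lemma dimRel_eq_zero_of_not_subset {κ : Finset P → Finset P → ℝ} :
    ∀ (n : ℕ) {μ l : Finset P}, ¬ μ ⊆ l → dimRel κ n μ l = 0
  | 0, μ, l => by
    intro h
    rw [dimRel, if_neg]
    rintro rfl
    exact h (Finset.Subset.refl μ)
  | n + 1, μ, l => by
    intro h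
    rw [dimRel]
    refine Finset.sum_eq_zero fun x _ => ?_
    rw [if_neg]
    rintro ⟨hcov, hsub⟩
    exact h (hsub.trans (Finset.erase_subset x l))

lemma dimRel_eq_zero_of_card {κ : Finset P → Finset P → ℝ} :
    ∀ (n : ℕ) {μ l : Finset P}, l.card ≠ μ.card + n → dimRel κ n μ l = 0
  | 0, μ, l => by
    intro h
    rw [dimRel, if_neg]
    rintro rfl
    omega
  | n + 1, μ, l => by
    intro h
    rw [dimRel]
    refine Finset.sum_eq_zero fun x hx => ?_
    split_ifs with hc
    · have h1 : l.card = (l.erase x).card + 1 := hc.1.2.2.2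
      have h2 : (l.erase x).card ≠ μ.card + n := by omega
      rw [dimRel_eq_zero_of_card n h2, mul_zero]
    · rfl

lemma dimI_eq_zero_of_not_subset {κ : Finset P → Finset P → ℝ} {μ l : Finset P}
    (h : ¬ μ ⊆ l) : dimI κ μ l = 0 :=
  dimRel_eq_zero_of_not_subset _ h

lemma dimI_self {κ : Finset P → Finset P → ℝ} (μ : Finset P) : dimI κ μ μ = 1 := by
  simp [dimI, dimRel]

lemma dimI_nonneg {κ : Finset P → Finset P → ℝ} (hκ : EdgePositive κ) (μ l : Finset P) :
    0 ≤ dimI κ μ l := dimRel_nonneg hκ _ μ l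

lemma dimI_of_card_eq {κ : Finset P → Finset P → ℝ} {μ l : Finset P} (h : l.card = μ.card) :
    dimI κ μ l = if μ = l then 1 else 0 := by
  have : l.card - μ.card = 0 := by omega
  rw [dimI, this, dimRel]

lemma dimI_rec {κ : Finset P → Finset P → ℝ} {μ l : Finset P} {n : ℕ}
    (h : l.card = μ.card + n + 1) :
    dimI κ μ l = ∑ x ∈ l, if CoversF (l.erase x) l
      then κ (l.erase x) l * dimI κ μ (l.erase x) else 0 := by
  have hd : l.card - μ.card = n + 1 := by omega
  rw [dimI, hd, dimRel]
  refine Finset.sum_congr rfl fun x hx => ?_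
  have hcard : (l.erase x).card = l.card - 1 := Finset.card_erase_of_mem hx
  by_cases hc : CoversF (l.erase x) l
  · by_cases hsub : μ ⊆ l.erase x
    · rw [if_pos ⟨hc, hsub⟩, if_pos hc, dimI]
      have : (l.erase x).card - μ.card = n := by omega
      rw [this]
    · rw [if_neg (by tauto), if_pos hc, dimI_eq_zero_of_not_subset hsub, mul_zero]
  · rw [if_neg (by tauto), if_neg hc]

lemma dimT_rec {κ : Finset P → Finset P → ℝ} {l : Finset P} {n : ℕ}
    (h : l.card = n + 1) :
    dimT κ l = ∑ x ∈ l, if CoversF (l.erase x) l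
      then κ (l.erase x) l * dimT κ (l.erase x) else 0 := by
  have h' : l.card = (∅ : Finset P).card + n + 1 := by simpa using h
  exact dimI_rec h'

lemma dimT_empty {κ : Finset P → Finset P → ℝ} : dimT κ (∅ : Finset P) = 1 := dimI_self ∅

lemma dimI_pos {κ : Finset P → Finset P → ℝ} (hκ : EdgePositive κ) :
    ∀ (m : ℕ) (μ l : Finset P), IsIdealF μ → IsIdealF l → μ ⊆ l →
      l.card = μ.card + m → 0 < dimI κ μ l := by
  intro m
  induction m with
  | zero =>
    intro μ l hμ hl hsub hcard
    have : μ = l := Finset.eq_of_subset_of_card_le hsub (by omega)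
    subst this
    rw [dimI_self]
    norm_num
  | succ n ih =>
    intro μ l hμ hl hsub hcard
    have hne : (l \ μ).Nonempty := by
      rw [← Finset.card_pos, Finset.card_sdiff_of_subset hsub]; omega
    obtain ⟨x, hx, hmax'⟩ := Finset.exists_maximal hne
    have hmax : ∀ y ∈ l \ μ, ¬ x < y := fun y hy hlt =>
      lt_irrefl _ (hlt.trans_le (hmax' hy hlt.le))
    have hxl : x ∈ l := (Finset.mem_sdiff.mp hx).1
    have hxμ : x ∉ μ := (Finset.mem_sdiff.mp hx).2
    have hσ : IsIdealF (l.erase x) := by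
      intro y hy z hz
      have hyl : y ∈ l := Finset.mem_of_mem_erase hy
      have hyx : y ≠ x := Finset.ne_of_mem_erase hy
      have hzl : z ∈ l := hl hyl hz
      refine Finset.mem_erase.mpr ⟨?_, hzl⟩
      rintro rfl
      have hyμ : y ∉ μ := fun hyμ => hxμ (hμ hyμ hz)
      have hymem : y ∈ l \ μ := Finset.mem_sdiff.mpr ⟨hyl, hyμ⟩
      exact hyx ((hz.lt_or_eq.resolve_left (hmax y hymem)).symm)
    have hcard' : (l.erase x).card = l.card - 1 := Finset.card_erase_of_mem hxl
    have hcov : CoversF (l.erase x) l :=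
      ⟨hσ, hl, Finset.erase_subset x l, by omega⟩
    have hsub' : μ ⊆ l.erase x := fun y hy =>
      Finset.mem_erase.mpr ⟨fun h => hxμ (h ▸ hy), hsub hy⟩
    have hterm : 0 < κ (l.erase x) l * dimI κ μ (l.erase x) :=
      mul_pos (hκ _ _ hcov) (ih μ (l.erase x) hμ hσ hsub' (by omega))
    rw [dimI_rec (by omega : l.card = μ.card + n + 1)]
    calc (0:ℝ) < κ (l.erase x) l * dimI κ μ (l.erase x) := hterm
    _ = if CoversF (l.erase x) l then κ (l.erase x) l * dimI κ μ (l.erase x) else 0 :=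
        (if_pos hcov).symm
    _ ≤ _ := by
        refine Finset.single_le_sum (f := fun y =>
          if CoversF (l.erase y) l then κ (l.erase y) l * dimI κ μ (l.erase y) else 0)
          (fun i _ => ?_) hxl
        split_ifs with h
        · exact mul_nonneg (hκ _ _ h).le (dimI_nonneg hκ _ _)
        · exact le_rfl

lemma dimT_pos {κ : Finset P → Finset P → ℝ} (hκ : EdgePositive κ) {l : Finset P}
    (hl : IsIdealF l) : 0 < dimT κ l :=
  dimI_pos hκ l.card ∅ l isIdealF_empty hl (Finset.empty_subset l) (by simp)

/-! ### levels, neighbour sets and sums over covers -/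

noncomputable def levF (hLF : LevelsFinite P) (n : ℕ) : Finset (Finset P) :=
  (hLF n).toFinset

lemma mem_levF {hLF : LevelsFinite P} {n : ℕ} {s : Finset P} :
    s ∈ levF hLF n ↔ IsIdealF s ∧ s.card = n := Set.Finite.mem_toFinset _

noncomputable def upF (hLF : LevelsFinite P) (l : Finset P) : Finset (Finset P) :=
  (levF hLF (l.card + 1)).filter (fun ν => CoversF l ν)

lemma mem_upF {hLF : LevelsFinite P} {l ν : Finset P} :
    ν ∈ upF hLF l ↔ CoversF l ν := by
  constructor
  · intro h
    exact (Finset.mem_filter.mp h).2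
  · intro h
    exact Finset.mem_filter.mpr ⟨mem_levF.mpr ⟨h.2.1, h.2.2.2⟩, h⟩

lemma sum_covers {M : Type*} [AddCommMonoid M] (ν : Finset P) (s : Finset (Finset P))
    (hs : ∀ l, l ∈ s ↔ CoversF l ν) (f : Finset P → M) :
    ∑ l ∈ s, f l = ∑ x ∈ ν, if CoversF (ν.erase x) ν then f (ν.erase x) else 0 := by
  rw [← Finset.sum_filter]
  refine (Finset.sum_bij (fun x _ => ν.erase x) ?_ ?_ ?_ ?_).symm
  · intro x hx
    exact (hs _).mpr (Finset.mem_filter.mp hx).2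
  · intro x hx y hy h
    have hxν : x ∈ ν := (Finset.mem_filter.mp hx).1
    by_contra hne
    have h' : ν.erase x = ν.erase y := h
    have : x ∈ ν.erase y := Finset.mem_erase.mpr ⟨hne, hxν⟩
    rw [← h'] at this
    exact (Finset.notMem_erase x ν) this
  · intro l hl
    have hcov : CoversF l ν := (hs _).mp hl
    obtain ⟨a, hal, hins, -⟩ := hcov.box
    have haν : a ∈ ν := hins ▸ Finset.mem_insert_self a l
    have herase : ν.erase a = l := by rw [hins, Finset.erase_insert hal]
    refine ⟨a, Finset.mem_filter.mpr ⟨haν, ?_⟩, herase⟩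
    rw [herase]; exact hcov
  · intro x hx; rfl

lemma tsum_pred {M : Type*} [AddCommMonoid M] [TopologicalSpace M] [T2Space M]
    {α : Type*} (p : α → Prop) (s : Finset α) (hs : ∀ a, p a ↔ a ∈ s) (f : α → M) :
    ∑' x : {a // p a}, f x.1 = ∑ a ∈ s, f a := by
  have h1 : ∑' x : {a // p a}, f x.1 = ∑' x : {a // a ∈ s}, f x.1 := by
    refine (tsum_congr ?_).trans
      ((Equiv.subtypeEquivRight (fun a => hs a)).tsum_eq (fun x : {a // a ∈ s} => f x.1))
    intro x
    simp only [Equiv.subtypeEquivRight_apply]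
  rw [h1, tsum_fintype]
  exact Finset.sum_coe_sort s f

lemma tsum_up_eq {M : Type*} [AddCommMonoid M] [TopologicalSpace M] [T2Space M]
    (hLF : LevelsFinite P) (l : Finset P) (f : Finset P → M) :
    ∑' ν : {ν : Finset P // CoversF l ν}, f ν.1 = ∑ ν ∈ upF hLF l, f ν :=
  tsum_pred _ _ (fun ν => mem_upF.symm) f

lemma tsum_dn_eq {M : Type*} [AddCommMonoid M] [TopologicalSpace M] [T2Space M]
    (l : Finset P) (f : Finset P → M) :
    ∑' μ : {μ : Finset P // CoversF μ l}, f μ.1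
      = ∑ x ∈ l, if CoversF (l.erase x) l then f (l.erase x) else 0 := by
  rw [tsum_pred (fun μ => CoversF μ l) (l.powerset.filter (fun μ => CoversF μ l))
    (fun μ => ⟨fun h => Finset.mem_filter.mpr ⟨Finset.mem_powerset.mpr h.2.2.1, h⟩,
      fun h => (Finset.mem_filter.mp h).2⟩) f]
  exact sum_covers l _ (fun μ => ⟨fun h => (Finset.mem_filter.mp h).2,
    fun h => Finset.mem_filter.mpr ⟨Finset.mem_powerset.mpr h.2.2.1, h⟩⟩) f

/-! ### Kerov condition in real form -/

noncomputable def sq2 (q : P → ℝ) (μ l : Finset P) : ℝ := ∑ x ∈ l \ μ, q x ^ 2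

lemma sq2_erase {q : P → ℝ} {l : Finset P} {x : P} (hx : x ∈ l) :
    sq2 q (l.erase x) l = q x ^ 2 := by
  rw [sq2, sdiff_erase_eq hx, Finset.sum_singleton]

lemma kerov_real {κ : Finset P → Finset P → ℝ} {q : P → ℝ} {t : ℝ}
    (hK : KerovCond κ (fun x => ((q x : ℂ)) ^ 2) (t : ℂ)) (hLF : LevelsFinite P)
    {l : Finset P} (hl : IsIdealF l) :
    ∑ ν ∈ upF hLF l, κ l ν ^ 2 * sq2 q l ν
      = 2 * l.card + t + ∑ x ∈ l,
          (if CoversF (l.erase x) l then κ (l.erase x) l ^ 2 * sq2 q (l.erase x) l else 0) := by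
  have h := hK l hl
  rw [tsum_up_eq hLF l (fun ν => (κ l ν : ℂ) ^ 2 * bx (fun x => ((q x : ℂ)) ^ 2) l ν),
    tsum_dn_eq l (fun μ => (κ μ l : ℂ) ^ 2 * bx (fun x => ((q x : ℂ)) ^ 2) μ l)] at h
  have e1 : ∑ ν ∈ upF hLF l, (κ l ν : ℂ) ^ 2 * bx (fun x => ((q x : ℂ)) ^ 2) l ν
      = ((∑ ν ∈ upF hLF l, κ l ν ^ 2 * sq2 q l ν : ℝ) : ℂ) := by
    rw [Complex.ofReal_sum]
    refine Finset.sum_congr rfl fun ν _ => ?_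
    push_cast [bx, sq2]
    ring
  have e2 : (∑ x ∈ l, if CoversF (l.erase x) l
        then (κ (l.erase x) l : ℂ) ^ 2 * bx (fun x => ((q x : ℂ)) ^ 2) (l.erase x) l else 0)
      = ((∑ x ∈ l, if CoversF (l.erase x) l
          then κ (l.erase x) l ^ 2 * sq2 q (l.erase x) l else 0 : ℝ) : ℂ) := by
    rw [Complex.ofReal_sum]
    refine Finset.sum_congr rfl fun x _ => ?_
    split_ifs
    · push_cast [bx, sq2]; ring
    · simp
  rw [e1, e2] at h
  have h' : (∑ ν ∈ upF hLF l, κ l ν ^ 2 * sq2 q l ν)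
      - (∑ x ∈ l, if CoversF (l.erase x) l
          then κ (l.erase x) l ^ 2 * sq2 q (l.erase x) l else 0)
      = 2 * l.card + t := by exact_mod_cast h
  linarith

/-! ### the up-recursion for `dimT` -/

lemma dimT_up {κ : Finset P → Finset P → ℝ} (hLF : LevelsFinite P) {l ν : Finset P}
    (hν : ν ∈ upF hLF l) :
    dimT κ ν = κ l ν * dimT κ l
      + ∑ x ∈ l, (if CoversF (ν.erase x) ν
          then κ (ν.erase x) ν * dimT κ (ν.erase x) else 0) := by
  have hcov : CoversF l ν := mem_upF.mp hν
  obtain ⟨a, hal, hins, hsd⟩ := hcov.box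
  have haν : a ∈ ν := hins ▸ Finset.mem_insert_self a l
  have herase : ν.erase a = l := by rw [hins, Finset.erase_insert hal]
  rw [dimT_rec hcov.2.2.2, ← Finset.sum_erase_add _ _ haν, herase, if_pos (herase ▸ hcov)]
  exact add_comm _ _

/-! ### the quadrangle bijection -/

lemma cover_shift {l ν : Finset P} {x : P} (hl : IsIdealF l) (hx : x ∈ l)
    (hc : CoversF l ν) (hcov2 : CoversF (ν.erase x) ν) :
    CoversF (l.erase x) (ν.erase x) ∧ ν.erase x ≠ l ∧ ν \ l = ν.erase x \ l.erase x := by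
  obtain ⟨a, hal, hins, hsd⟩ := hc.box
  have hax : a ≠ x := fun h => hal (h ▸ hx)
  have hρ : ν.erase x = insert a (l.erase x) := by
    rw [hins, Finset.erase_insert_of_ne hax]
  have haσ : a ∉ l.erase x := fun h => hal (Finset.mem_of_mem_erase h)
  have hσI : IsIdealF (l.erase x) := by
    intro y hy z hz
    have hyρ : y ∈ ν.erase x := by rw [hρ]; exact Finset.mem_insert_of_mem hy
    have hzρ : z ∈ ν.erase x := hcov2.1 hyρ hz
    rw [hρ, Finset.mem_insert] at hzρ
    rcases hzρ with rfl | hzσ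
    · exact absurd (hl (Finset.mem_of_mem_erase hy) hz) hal
    · exact hzσ
  have hsub : l.erase x ⊆ ν.erase x := by
    rw [hρ]; exact Finset.subset_insert a _
  have hcards : (ν.erase x).card = (l.erase x).card + 1 := by
    rw [hρ, Finset.card_insert_of_notMem haσ]
  have hne : ν.erase x ≠ l := by
    intro h
    have : a ∈ l := h ▸ (hρ ▸ Finset.mem_insert_self a (l.erase x))
    exact hal this
  refine ⟨⟨hσI, hcov2.1, hsub, hcards⟩, hne, ?_⟩
  rw [hsd, hρ]
  ext y
  simp only [Finset.mem_sdiff, Finset.mem_insert, Finset.mem_singleton]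
  constructor
  · rintro rfl
    exact ⟨Or.inl rfl, haσ⟩
  · rintro ⟨rfl | hyσ, hyn⟩
    · rfl
    · exact absurd hyσ hyn

lemma off_inner {κ : Finset P → Finset P → ℝ} {q : P → ℝ}
    (hUD : UDSelfDual κ) (hLF : LevelsFinite P) {l : Finset P} (hl : IsIdealF l)
    {x : P} (hx : x ∈ l) :
    ∑ ν ∈ upF hLF l, (if CoversF (ν.erase x) ν
        then κ l ν * sq2 q l ν * (κ (ν.erase x) ν * dimT κ (ν.erase x)) else 0)
      = ∑ ρ ∈ (upF hLF (l.erase x)).erase l,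
          κ (l.erase x) l * (κ (l.erase x) ρ * sq2 q (l.erase x) ρ * dimT κ ρ) := by
  rw [← Finset.sum_filter]
  refine Finset.sum_bij (fun ν _ => ν.erase x) ?_ ?_ ?_ ?_
  · intro ν hν
    obtain ⟨hνup, hcov2⟩ := Finset.mem_filter.mp hν
    obtain ⟨hcσρ, hne, -⟩ := cover_shift hl hx (mem_upF.mp hνup) hcov2
    exact Finset.mem_erase.mpr ⟨hne, mem_upF.mpr hcσρ⟩
  · intro ν₁ h₁ ν₂ h₂ h
    have h' : ν₁.erase x = ν₂.erase x := h
    have hx₁ : x ∈ ν₁ := (mem_upF.mp (Finset.mem_filter.mp h₁).1).2.2.1 hx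
    have hx₂ : x ∈ ν₂ := (mem_upF.mp (Finset.mem_filter.mp h₂).1).2.2.1 hx
    rw [← Finset.insert_erase hx₁, h', Finset.insert_erase hx₂]
  · intro ρ hρmem
    obtain ⟨hρl, hρup⟩ := Finset.mem_erase.mp hρmem
    have hcσρ : CoversF (l.erase x) ρ := mem_upF.mp hρup
    obtain ⟨b, hbσ, hbins, hbsd⟩ := hcσρ.box
    have hbx : b ≠ x := by
      rintro rfl
      exact hρl (by rw [hbins, Finset.insert_erase hx])
    have hbl : b ∉ l := fun hbl => hbσ (Finset.mem_erase.mpr ⟨hbx, hbl⟩)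
    have hxρ : x ∉ ρ := by
      rw [hbins]
      intro h
      rcases Finset.mem_insert.mp h with h' | h'
      · exact hbx h'.symm
      · exact (Finset.notMem_erase x l) h'
    have hlsub : l ⊆ insert x ρ := by
      intro y hy
      by_cases hyx : y = x
      · exact hyx ▸ Finset.mem_insert_self x ρ
      · exact Finset.mem_insert_of_mem
          (by rw [hbins]; exact Finset.mem_insert_of_mem (Finset.mem_erase.mpr ⟨hyx, hy⟩))
    have hνunion : insert x ρ = l ∪ ρ := by
      apply Finset.Subset.antisymm
      · intro y hy
        rcases Finset.mem_insert.mp hy with rfl | hyρ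
        · exact Finset.mem_union_left _ hx
        · exact Finset.mem_union_right _ hyρ
      · intro y hy
        rcases Finset.mem_union.mp hy with hyl | hyρ
        · exact hlsub hyl
        · exact Finset.mem_insert_of_mem hyρ
    have hνI : IsIdealF (insert x ρ) := by
      rw [hνunion]; exact hl.union hcσρ.2.1
    have hcards : (insert x ρ).card = ρ.card + 1 := Finset.card_insert_of_notMem hxρ
    have hposl : 0 < l.card := Finset.card_pos.mpr ⟨x, hx⟩
    have hcardl : l.card = (l.erase x).card + 1 := by
      rw [Finset.card_erase_of_mem hx]; omega
    have hcν : CoversF l (insert x ρ) :=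
      ⟨hl, hνI, hlsub, by rw [hcards, hcσρ.2.2.2]; omega⟩
    have herase' : (insert x ρ).erase x = ρ := Finset.erase_insert hxρ
    refine ⟨insert x ρ, Finset.mem_filter.mpr ⟨mem_upF.mpr hcν, ?_⟩, herase'⟩
    rw [herase']
    exact ⟨hcσρ.2.1, hνI, Finset.subset_insert x ρ, hcards⟩
  · intro ν hν
    obtain ⟨hνup, hcov2⟩ := Finset.mem_filter.mp hν
    have hc : CoversF l ν := mem_upF.mp hνup
    obtain ⟨hcσρ, hne, hbox⟩ := cover_shift hl hx hc hcov2
    have hcσl : CoversF (l.erase x) l := by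
      refine ⟨hcσρ.1, hl, Finset.erase_subset x l, ?_⟩
      have hposl : 0 < l.card := Finset.card_pos.mpr ⟨x, hx⟩
      rw [Finset.card_erase_of_mem hx]; omega
    have hud := hUD (l.erase x) (ν.erase x) l ν hcσρ hcov2 hcσl hc hne
    have hsq : sq2 q l ν = sq2 q (l.erase x) (ν.erase x) := by
      rw [sq2, sq2, hbox]
    rw [hsq]
    linear_combination
      (-(sq2 q (l.erase x) (ν.erase x) * dimT κ (ν.erase x))) * hud

/-! ### the key commutation identity -/

lemma key {κ : Finset P → Finset P → ℝ} {q : P → ℝ} {t : ℝ}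
    (hκ : EdgePositive κ) (hUD : UDSelfDual κ)
    (hK : KerovCond κ (fun x => ((q x : ℂ)) ^ 2) (t : ℂ)) (hLF : LevelsFinite P) :
    ∀ (n : ℕ) (l : Finset P), IsIdealF l → l.card = n →
      ∑ ν ∈ upF hLF l, κ l ν * sq2 q l ν * dimT κ ν
        = ((n : ℝ) + 1) * ((n : ℝ) + t) * dimT κ l := by
  intro n
  induction n using Nat.strong_induction_on with
  | _ n ih =>
  intro l hl hcard
  have hstep : ∀ ν ∈ upF hLF l, κ l ν * sq2 q l ν * dimT κ ν
      = κ l ν ^ 2 * sq2 q l ν * dimT κ l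
        + ∑ x ∈ l, (if CoversF (ν.erase x) ν
            then κ l ν * sq2 q l ν * (κ (ν.erase x) ν * dimT κ (ν.erase x)) else 0) := by
    intro ν hν
    rw [dimT_up hLF hν, mul_add, Finset.mul_sum]
    congr 1
    · ring
    · refine Finset.sum_congr rfl fun x _ => ?_
      rw [mul_ite, mul_zero]
  rw [Finset.sum_congr rfl hstep, Finset.sum_add_distrib, Finset.sum_comm,
    ← Finset.sum_mul, kerov_real hK hLF hl, hcard]
  rcases Nat.eq_zero_or_pos n with rfl | hn
  · have hl0 : l = ∅ := Finset.card_eq_zero.mp hcard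
    subst hl0
    simp [dimT_empty]
  · -- n ≥ 1
    have hx_inner : ∀ x ∈ l,
        (∑ ν ∈ upF hLF l, if CoversF (ν.erase x) ν
            then κ l ν * sq2 q l ν * (κ (ν.erase x) ν * dimT κ (ν.erase x)) else 0)
        = if CoversF (l.erase x) l
            then κ (l.erase x) l * ((((n - 1 : ℕ) : ℝ) + 1) * (((n - 1 : ℕ) : ℝ) + t)
                  * dimT κ (l.erase x))
              - κ (l.erase x) l * (κ (l.erase x) l * sq2 q (l.erase x) l * dimT κ l)
            else 0 := by
      intro x hx
      rw [off_inner hUD hLF hl hx]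
      by_cases hσc : CoversF (l.erase x) l
      · rw [if_pos hσc]
        have hσcard : (l.erase x).card = n - 1 := by
          rw [Finset.card_erase_of_mem hx, hcard]
        have hlmem : l ∈ upF hLF (l.erase x) := mem_upF.mpr hσc
        have hkey := ih (n - 1) (by omega) (l.erase x) hσc.1 hσcard
        have hsum := Finset.sum_erase_add (upF hLF (l.erase x)) (fun ρ =>
          κ (l.erase x) l * (κ (l.erase x) ρ * sq2 q (l.erase x) ρ * dimT κ ρ)) hlmem
        have hfull : ∑ ρ ∈ upF hLF (l.erase x),
            κ (l.erase x) l * (κ (l.erase x) ρ * sq2 q (l.erase x) ρ * dimT κ ρ)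
            = κ (l.erase x) l * ((((n - 1 : ℕ) : ℝ) + 1) * (((n - 1 : ℕ) : ℝ) + t)
                * dimT κ (l.erase x)) := by
          rw [← Finset.mul_sum, hkey]
        rw [← hfull, ← hsum]
        ring
      · rw [if_neg hσc]
        refine Finset.sum_eq_zero fun ρ hρ => ?_
        have hcσρ : CoversF (l.erase x) ρ := mem_upF.mp (Finset.mem_erase.mp hρ).2
        exfalso
        refine hσc ⟨hcσρ.1, hl, Finset.erase_subset x l, ?_⟩
        have hposl : 0 < l.card := Finset.card_pos.mpr ⟨x, hx⟩
        rw [Finset.card_erase_of_mem hx]; omega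
    rw [Finset.sum_congr rfl hx_inner]
    have hsplit : ∑ x ∈ l, (if CoversF (l.erase x) l
          then κ (l.erase x) l * ((((n - 1 : ℕ) : ℝ) + 1) * (((n - 1 : ℕ) : ℝ) + t)
                * dimT κ (l.erase x))
            - κ (l.erase x) l * (κ (l.erase x) l * sq2 q (l.erase x) l * dimT κ l)
          else 0)
        = ((((n - 1 : ℕ) : ℝ) + 1) * (((n - 1 : ℕ) : ℝ) + t))
            * (∑ x ∈ l, if CoversF (l.erase x) l
                then κ (l.erase x) l * dimT κ (l.erase x) else 0)
          - (∑ x ∈ l, if CoversF (l.erase x) l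
                then κ (l.erase x) l ^ 2 * sq2 q (l.erase x) l else 0) * dimT κ l := by
      rw [Finset.mul_sum, Finset.sum_mul, ← Finset.sum_sub_distrib]
      refine Finset.sum_congr rfl fun x _ => ?_
      split_ifs
      · ring
      · ring
    rw [hsplit, ← dimT_rec (by omega : l.card = (n - 1) + 1)]
    have hcast : ((n - 1 : ℕ) : ℝ) = (n : ℝ) - 1 := by
      have : (1 : ℕ) ≤ n := hn
      push_cast [Nat.cast_sub this]
      ring
    rw [hcast]
    ring

/-! ### swapping pair sums between adjacent levels -/

lemma pair_swap (hLF : LevelsFinite P) (n np : ℕ) (hnp : np = n + 1)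
    (f : Finset P → Finset P → ℝ) :
    ∑ ν ∈ levF hLF np, ∑ x ∈ ν,
        (if CoversF (ν.erase x) ν then f (ν.erase x) ν else 0)
      = ∑ l ∈ levF hLF n, ∑ ν ∈ upF hLF l, f l ν := by
  subst hnp
  have h1 : ∀ l ∈ levF hLF n, ∑ ν ∈ upF hLF l, f l ν
      = ∑ ν ∈ levF hLF (n + 1), if CoversF l ν then f l ν else 0 := by
    intro l hl
    rw [← Finset.sum_filter]
    congr 1
    unfold upF
    rw [(mem_levF.mp hl).2]
  rw [Finset.sum_congr rfl h1, Finset.sum_comm]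
  refine Finset.sum_congr rfl fun ν hν => ?_
  have hν' := mem_levF.mp hν
  conv_rhs => rw [← Finset.sum_filter]
  refine (sum_covers ν _ (fun l => ?_) (fun l => f l ν)).symm
  constructor
  · intro h
    exact (Finset.mem_filter.mp h).2
  · intro h
    refine Finset.mem_filter.mpr ⟨mem_levF.mpr ⟨h.1, ?_⟩, h⟩
    have h2 := h.2.2.2
    omega

/-! ### the level sums -/

lemma Ssum {κ : Finset P → Finset P → ℝ} {q : P → ℝ} {t : ℝ}
    (hκ : EdgePositive κ) (hUD : UDSelfDual κ)
    (hK : KerovCond κ (fun x => ((q x : ℂ)) ^ 2) (t : ℂ)) (hLF : LevelsFinite P)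
    {μ : Finset P} (hμ : IsIdealF μ) :
    ∀ m : ℕ, ∑ l ∈ levF hLF (μ.card + m),
        dimI κ μ l * dimT κ l * ∏ x ∈ l \ μ, q x ^ 2
      = dimT κ μ * (((μ.card + 1).ascFactorial m : ℕ) : ℝ)
          * (ascPochhammer ℝ m).eval (t + μ.card) := by
  intro m
  induction m with
  | zero =>
    have hterm : ∀ l ∈ levF hLF (μ.card + 0),
        dimI κ μ l * dimT κ l * ∏ x ∈ l \ μ, q x ^ 2
        = if μ = l then dimT κ l * ∏ x ∈ l \ μ, q x ^ 2 else 0 := by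
      intro l hl
      rw [dimI_of_card_eq (by simpa using (mem_levF.mp hl).2)]
      split_ifs <;> ring
    rw [Finset.sum_congr rfl hterm, Finset.sum_ite_eq]
    rw [if_pos (mem_levF.mpr ⟨hμ, by omega⟩)]
    simp [ascPochhammer_zero]
  | succ m ihm =>
    have hrec : ∀ ν ∈ levF hLF (μ.card + (m + 1)),
        dimI κ μ ν * dimT κ ν * ∏ x ∈ ν \ μ, q x ^ 2
        = ∑ x ∈ ν, (if CoversF (ν.erase x) ν
            then (κ (ν.erase x) ν * dimI κ μ (ν.erase x))
              * (dimT κ ν * ∏ y ∈ ν \ μ, q y ^ 2) else 0) := by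
      intro ν hν
      have hνc : ν.card = μ.card + m + 1 := by
        have := (mem_levF.mp hν).2; omega
      rw [dimI_rec hνc, Finset.sum_mul, Finset.sum_mul]
      refine Finset.sum_congr rfl fun x _ => by split_ifs <;> ring
    rw [Finset.sum_congr rfl hrec,
      pair_swap hLF (μ.card + m) (μ.card + (m + 1)) (by omega)
        (fun l ν => (κ l ν * dimI κ μ l) * (dimT κ ν * ∏ y ∈ ν \ μ, q y ^ 2))]
    have hinner : ∀ l ∈ levF hLF (μ.card + m),
        ∑ ν ∈ upF hLF l, (κ l ν * dimI κ μ l) * (dimT κ ν * ∏ y ∈ ν \ μ, q y ^ 2)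
        = (((μ.card + m : ℕ) : ℝ) + 1) * (((μ.card + m : ℕ) : ℝ) + t)
            * (dimI κ μ l * dimT κ l * ∏ x ∈ l \ μ, q x ^ 2) := by
      intro l hl
      obtain ⟨hlI, hlc⟩ := mem_levF.mp hl
      by_cases hsub : μ ⊆ l
      · have hνeq : ∀ ν ∈ upF hLF l,
            ∏ y ∈ ν \ μ, q y ^ 2 = sq2 q l ν * ∏ y ∈ l \ μ, q y ^ 2 := by
          intro ν hνm
          have hcov : CoversF l ν := mem_upF.mp hνm
          obtain ⟨a, hal, hins, hsd⟩ := hcov.box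
          have hdisj : Disjoint (ν \ l) (l \ μ) := by
            rw [Finset.disjoint_left]
            intro y hy₁ hy₂
            exact (Finset.mem_sdiff.mp hy₁).2 (Finset.mem_sdiff.mp hy₂).1
          have hun : (ν \ l) ∪ (l \ μ) = ν \ μ := by
            ext y
            simp only [Finset.mem_union, Finset.mem_sdiff]
            constructor
            · rintro (⟨h1, h2⟩ | ⟨h1, h2⟩)
              · exact ⟨h1, fun hm => h2 (hsub hm)⟩
              · exact ⟨hcov.2.2.1 h1, h2⟩
            · rintro ⟨h1, h2⟩
              by_cases hyl : y ∈ l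
              · exact Or.inr ⟨hyl, h2⟩
              · exact Or.inl ⟨h1, hyl⟩
          rw [← hun, Finset.prod_union hdisj]
          congr 1
          rw [hsd, Finset.prod_singleton, sq2, hsd, Finset.sum_singleton]
        calc ∑ ν ∈ upF hLF l, (κ l ν * dimI κ μ l) * (dimT κ ν * ∏ y ∈ ν \ μ, q y ^ 2)
            = ∑ ν ∈ upF hLF l, (dimI κ μ l * ∏ y ∈ l \ μ, q y ^ 2)
                * (κ l ν * sq2 q l ν * dimT κ ν) := by
              refine Finset.sum_congr rfl fun ν hνm => ?_
              rw [hνeq ν hνm]; ring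
          _ = (dimI κ μ l * ∏ y ∈ l \ μ, q y ^ 2)
                * ∑ ν ∈ upF hLF l, κ l ν * sq2 q l ν * dimT κ ν :=
              (Finset.mul_sum _ _ _).symm
          _ = _ := by
              rw [key hκ hUD hK hLF (μ.card + m) l hlI hlc]
              ring
      · rw [dimI_eq_zero_of_not_subset hsub]
        simp
    rw [Finset.sum_congr rfl hinner, ← Finset.mul_sum, ihm]
    rw [Nat.ascFactorial_succ, ascPochhammer_succ_right, Polynomial.eval_mul]
    simp only [Polynomial.eval_add, Polynomial.eval_X, Polynomial.eval_natCast]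
    push_cast
    ring

/-! ### the binomial series -/

noncomputable def ascC (a : ℝ) (m : ℕ) : ℝ :=
  (ascPochhammer ℝ m).eval a / m.factorial

noncomputable def ascS (a y : ℝ) : ℝ := ∑' m : ℕ, ascC a m * y ^ m

noncomputable def ascS' (a y : ℝ) : ℝ := ∑' m : ℕ, ascC a m * (m * y ^ (m - 1))

lemma ascPochhammer_eval_pos {a : ℝ} (ha : 0 < a) (m : ℕ) :
    0 < (ascPochhammer ℝ m).eval a := by
  induction m with
  | zero => simp
  | succ m ih =>
    rw [ascPochhammer_succ_right, Polynomial.eval_mul]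
    simp only [Polynomial.eval_add, Polynomial.eval_X, Polynomial.eval_natCast]
    have : (0:ℝ) ≤ m := Nat.cast_nonneg m
    exact mul_pos ih (by linarith)

lemma ascC_pos {a : ℝ} (ha : 0 < a) (m : ℕ) : 0 < ascC a m := by
  have h1 := ascPochhammer_eval_pos ha m
  have h2 : (0:ℝ) < m.factorial := by
    exact_mod_cast Nat.factorial_pos m
  exact div_pos h1 h2

lemma ascC_succ (a : ℝ) (m : ℕ) :
    ascC a (m + 1) = ascC a m * ((a + m) / (m + 1)) := by
  rw [ascC, ascC, ascPochhammer_succ_right, Polynomial.eval_mul, div_mul_div_comm]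
  simp only [Polynomial.eval_add, Polynomial.eval_X, Polynomial.eval_natCast,
    Nat.factorial_succ]
  push_cast
  rw [mul_comm ((m : ℝ) + 1) (m.factorial : ℝ)]

lemma tendsto_ratio_aux (a : ℝ) :
    Filter.Tendsto (fun m : ℕ => (a + m) / (m + 1)) Filter.atTop (nhds 1) := by
  have h : ∀ m : ℕ, (a + m) / (m + 1) = 1 + (a - 1) * (1 / (m + 1)) := by
    intro m
    have hm : (m : ℝ) + 1 ≠ 0 := by positivity
    field_simp
    ring
  simp only [h]
  have h2 := tendsto_one_div_add_atTop_nhds_zero_nat (𝕜 := ℝ)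
  have h3 := Filter.Tendsto.const_mul (a - 1) h2
  simpa using Filter.Tendsto.const_add 1 h3

lemma summable_asc {a r : ℝ} (ha : 0 < a) (hr0 : 0 ≤ r) (hr1 : r < 1) :
    Summable (fun m : ℕ => ascC a m * r ^ m) := by
  rcases eq_or_lt_of_le hr0 with rfl | hr
  · apply summable_of_ne_finset_zero (s := {0})
    intro m hm
    have h : m ≠ 0 := by simpa using hm
    simp [zero_pow h]
  · refine summable_of_ratio_test_tendsto_lt_one hr1 ?_ ?_
    · filter_upwards with m
      have h1 := ascC_pos ha m
      positivity
    · have heq : ∀ m : ℕ, ‖ascC a (m + 1) * r ^ (m + 1)‖ / ‖ascC a m * r ^ m‖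
          = (a + m) / (m + 1) * r := by
        intro m
        have h1 := ascC_pos ha m
        have h1' := ascC_pos ha (m + 1)
        rw [Real.norm_eq_abs, Real.norm_eq_abs,
          abs_of_pos (by positivity), abs_of_pos (by positivity), ascC_succ,
          pow_succ]
        have h2 : ((m : ℝ) + 1) ≠ 0 := by positivity
        field_simp
      simp only [heq]
      have := (tendsto_ratio_aux a).mul_const r
      simpa using this

lemma summable_asc_deriv {a r : ℝ} (ha : 0 < a) (hr0 : 0 ≤ r) (hr1 : r < 1) :
    Summable (fun m : ℕ => ascC a m * (m * r ^ (m - 1))) := by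
  rw [← summable_nat_add_iff 1]
  rcases eq_or_lt_of_le hr0 with rfl | hr
  · apply summable_of_ne_finset_zero (s := {0})
    intro m hm
    have h : m ≠ 0 := by simpa using hm
    simp [zero_pow h]
  · refine summable_of_ratio_test_tendsto_lt_one hr1 ?_ ?_
    · filter_upwards with m
      have h1 := ascC_pos ha (m + 1)
      have h2 : (0:ℝ) < (m:ℝ) + 1 := by positivity
      simp only [Nat.add_sub_cancel]
      push_cast
      positivity
    · have heq : ∀ m : ℕ, ‖ascC a (m + 1 + 1) * ((m + 1 + 1 : ℕ) * r ^ (m + 1 + 1 - 1))‖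
          / ‖ascC a (m + 1) * ((m + 1 : ℕ) * r ^ (m + 1 - 1))‖
          = (a + 1 + m) / (m + 1) * r := by
        intro m
        have h1 := ascC_pos ha (m + 1)
        have h1' := ascC_pos ha (m + 1 + 1)
        simp only [Nat.add_sub_cancel]
        rw [Real.norm_eq_abs, Real.norm_eq_abs,
          abs_of_pos (by push_cast; positivity), abs_of_pos (by push_cast; positivity),
          ascC_succ a (m + 1), pow_succ]
        have h2 : ((m : ℝ) + 1) ≠ 0 := by positivity
        have h3 : ((m : ℝ) + 1 + 1) ≠ 0 := by positivity
        push_cast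
        field_simp
        ring
      simp only [heq]
      have := (tendsto_ratio_aux (a + 1)).mul_const r
      simpa using this

lemma ascS_hasDerivAt {a r : ℝ} (ha : 0 < a) (hr0 : 0 < r) (hr1 : r < 1)
    {y : ℝ} (hy : y ∈ Set.Ioo (-r) r) :
    HasDerivAt (ascS a) (ascS' a y) y := by
  refine hasDerivAt_tsum_of_isPreconnected
    (u := fun m : ℕ => ascC a m * (m * r ^ (m - 1)))
    (summable_asc_deriv ha hr0.le hr1) isOpen_Ioo
    (Convex.isPreconnected (convex_Ioo _ _))
    (fun m z _ => (hasDerivAt_pow m z).const_mul (ascC a m))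
    (fun m z hz => ?_) (?_ : (0:ℝ) ∈ Set.Ioo (-r) r) ?_ hy
  · have h1 := (ascC_pos ha m).le
    have hzr : |z| ≤ r := by
      rw [abs_le]
      exact ⟨hz.1.le, hz.2.le⟩
    rw [norm_mul, norm_mul, norm_pow, Real.norm_eq_abs, Real.norm_eq_abs,
      Real.norm_eq_abs, abs_of_nonneg h1, abs_of_nonneg (Nat.cast_nonneg m)]
    exact mul_le_mul_of_nonneg_left
      (mul_le_mul_of_nonneg_left (pow_le_pow_left₀ (abs_nonneg z) hzr _)
        (Nat.cast_nonneg m)) h1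
  · exact ⟨by linarith, hr0⟩
  · apply summable_of_ne_finset_zero (s := {0})
    intro m hm
    have h : m ≠ 0 := by simpa using hm
    simp [zero_pow h]

lemma ascS_zero (a : ℝ) : ascS a 0 = 1 := by
  rw [ascS, tsum_eq_single 0 (fun m hm => by simp [zero_pow hm])]
  simp [ascC]

lemma ascS_ode {a y : ℝ} (ha : 0 < a) (h0 : 0 ≤ y) (h1 : y < 1) :
    (1 - y) * ascS' a y = a * ascS a y := by
  have hsum : Summable (fun m : ℕ => ascC a m * y ^ m) := summable_asc ha h0 h1
  have hS1 : Summable (fun m : ℕ => ascC a m * (m * y ^ (m - 1))) :=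
    summable_asc_deriv ha h0 h1
  have hme : Summable (fun m : ℕ => (m : ℝ) * (ascC a m * y ^ m)) := by
    refine (hS1.mul_left y).congr fun m => ?_
    cases m with
    | zero => simp
    | succ k =>
      simp only [Nat.add_sub_cancel, pow_succ]
      ring
  have hsplit : ∀ m : ℕ, ascC a (m + 1) * (((m + 1 : ℕ) : ℝ) * y ^ (m + 1 - 1))
      = a * (ascC a m * y ^ m) + (m : ℝ) * (ascC a m * y ^ m) := by
    intro m
    simp only [Nat.add_sub_cancel]
    rw [ascC_succ]
    have h2 : ((m : ℝ) + 1) ≠ 0 := by positivity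
    push_cast
    field_simp
  have hT : ∑' m : ℕ, (m : ℝ) * (ascC a m * y ^ m) = y * ascS' a y := by
    unfold ascS'
    rw [← tsum_mul_left]
    refine tsum_congr fun m => ?_
    cases m with
    | zero => simp
    | succ k =>
      simp only [Nat.add_sub_cancel, pow_succ]
      ring
  have e1 : ascS' a y = a * ascS a y + y * ascS' a y := by
    conv_lhs => rw [ascS']
    rw [Summable.tsum_eq_zero_add hS1]
    simp only [Nat.cast_zero, zero_mul, mul_zero, zero_add]
    rw [tsum_congr hsplit, Summable.tsum_add (hsum.mul_left a) hme, tsum_mul_left, ← ascS, hT]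
  linear_combination e1

lemma binom_main {a ξ : ℝ} (ha : 0 < a) (h0 : 0 ≤ ξ) (h1 : ξ < 1) :
    ascS a ξ * (1 - ξ) ^ a = 1 := by
  rcases eq_or_lt_of_le h0 with rfl | hξ
  · rw [ascS_zero]
    simp [Real.one_rpow]
  · set r : ℝ := (1 + ξ) / 2 with hrdef
    have hr0 : (0:ℝ) < r := by rw [hrdef]; linarith
    have hr1 : r < 1 := by rw [hrdef]; linarith
    have hξr : ξ < r := by rw [hrdef]; linarith
    have hΦ : ∀ y ∈ Set.Icc (0:ℝ) ξ,
        HasDerivAt (fun z => ascS a z * (1 - z) ^ a) 0 y := by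
      intro y hy
      obtain ⟨hy0, hyξ⟩ := hy
      have hyr : y ∈ Set.Ioo (-r) r := ⟨by linarith, by linarith⟩
      have hy1 : (0:ℝ) < 1 - y := by linarith
      have hdF := ascS_hasDerivAt ha hr0 hr1 hyr
      have hpow : HasDerivAt (fun z : ℝ => (1 - z) ^ a)
          (-(a * (1 - y) ^ (a - 1))) y := by
        have h2 : HasDerivAt (fun z : ℝ => 1 - z) (-1) y :=
          (hasDerivAt_id y).const_sub 1
        have h3 := Real.hasDerivAt_rpow_const (x := 1 - y) (p := a) (Or.inl hy1.ne')
        have h4 := h3.comp y h2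
        have h5 : HasDerivAt (fun z : ℝ => (1 - z) ^ a) (a * (1 - y) ^ (a - 1) * -1) y := h4
        exact h5.congr_deriv (by ring)
      have hmul := hdF.mul hpow
      refine HasDerivAt.congr_deriv hmul (Eq.symm ?_)
      have hrw : (1 - y) ^ a = (1 - y) ^ (a - 1) * (1 - y) := by
        rw [← Real.rpow_add_one hy1.ne' (a - 1), sub_add_cancel]
      have hode := ascS_ode ha hy0 (by linarith : y < 1)
      rw [hrw]
      linear_combination (-(1 - y) ^ (a - 1)) * hode
    have hconst := constant_of_has_deriv_right_zero
      (f := fun z => ascS a z * (1 - z) ^ a)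
      (fun y hy => (hΦ y hy).continuousAt.continuousWithinAt)
      (fun y hy => (hΦ y (Set.Ico_subset_Icc_self hy)).hasDerivWithinAt)
    have hval : ascS a ξ * (1 - ξ) ^ a = ascS a 0 * (1 - 0) ^ a :=
      hconst ξ ⟨h0, le_refl ξ⟩
    rw [hval, ascS_zero]
    simp [Real.one_rpow]

end Aux

/-- the moment functional: `Σ_λ P*_μ(λ) M_ξ(λ)
  = (ξ/(1−ξ))^{|μ|} (∏_{□∈μ} 𝗊(□)²) dim μ / |μ|!`. -/
theorem statement14 {P : Type*} [PartialOrder P]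
    (κ : Finset P → Finset P → ℝ) (q : P → ℝ) (t ξ : ℝ)
    (hκ : EdgePositive κ) (hq : ∀ x : P, 0 < q x) (ht : 0 < t)
    (hξ0 : 0 < ξ) (hξ1 : ξ < 1)
    (hLF : LevelsFinite P) (hUD : UDSelfDual κ)
    (hK : KerovCond κ (fun x => ((q x : ℂ)) ^ 2) (t : ℂ)) :
    ∀ μ : Finset P, IsIdealF μ →
      Summable (fun l : G P => Pstar κ μ l.1 * Mxi κ q t ξ l.1) ∧
      ∑' l : G P, Pstar κ μ l.1 * Mxi κ q t ξ l.1
        = (ξ / (1 - ξ)) ^ μ.card * (∏ x ∈ μ, q x ^ 2) * dimT κ μ /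
            (Nat.factorial μ.card : ℝ) := by
  intro μ hμ
  have h1ξ : (0:ℝ) < 1 - ξ := by linarith
  -- pointwise formula
  have hfeq : ∀ l : Finset P, IsIdealF l →
      Pstar κ μ l * Mxi κ q t ξ l
      = ((1 - ξ) ^ t * ξ ^ l.card * (l.card.descFactorial μ.card : ℝ)
          / ((l.card.factorial : ℝ)) ^ 2 * ∏ x ∈ μ, q x ^ 2)
        * (dimI κ μ l * dimT κ l * ∏ x ∈ l \ μ, q x ^ 2) := by
    intro l hl
    have hT := dimT_pos hκ hl
    have hfac : ((l.card.factorial : ℝ)) ≠ 0 := by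
      exact_mod_cast Nat.factorial_ne_zero l.card
    by_cases hsub : μ ⊆ l
    · rw [Pstar, Mxi, ← Finset.prod_sdiff hsub]
      field_simp
    · rw [Pstar, dimI_eq_zero_of_not_subset hsub]
      simp
  -- per level sums
  have hlev : ∀ n : ℕ, ∑ l ∈ levF hLF n, Pstar κ μ l * Mxi κ q t ξ l
      = ((1 - ξ) ^ t * ξ ^ n * (n.descFactorial μ.card : ℝ) / ((n.factorial : ℝ)) ^ 2
          * ∏ x ∈ μ, q x ^ 2)
        * ∑ l ∈ levF hLF n, dimI κ μ l * dimT κ l * ∏ x ∈ l \ μ, q x ^ 2 := by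
    intro n
    rw [Finset.mul_sum]
    refine Finset.sum_congr rfl fun l hl => ?_
    obtain ⟨hlI, hlc⟩ := mem_levF.mp hl
    rw [hfeq l hlI, hlc]
  have hlev2 : ∀ m : ℕ, ∑ l ∈ levF hLF (μ.card + m), Pstar κ μ l * Mxi κ q t ξ l
      = ((1 - ξ) ^ t * (∏ x ∈ μ, q x ^ 2) * dimT κ μ * ξ ^ μ.card
          / (μ.card.factorial : ℝ))
        * (ascC (t + μ.card) m * ξ ^ m) := by
    intro m
    rw [hlev (μ.card + m), Ssum hκ hUD hK hLF hμ m]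
    have hm : ((m.factorial : ℝ)) ≠ 0 := by exact_mod_cast Nat.factorial_ne_zero m
    have hk : ((μ.card.factorial : ℝ)) ≠ 0 := by
      exact_mod_cast Nat.factorial_ne_zero μ.card
    have hkm : (((μ.card + m).factorial : ℝ)) ≠ 0 := by
      exact_mod_cast Nat.factorial_ne_zero (μ.card + m)
    have h1 : (m.factorial : ℝ) * (((μ.card + m).descFactorial μ.card : ℕ) : ℝ)
        = (((μ.card + m).factorial : ℕ) : ℝ) := by
      have h := Nat.factorial_mul_descFactorial (Nat.le_add_right μ.card m)
      rw [Nat.add_sub_cancel_left] at h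
      exact_mod_cast h
    have h2 : (μ.card.factorial : ℝ) * (((μ.card + 1).ascFactorial m : ℕ) : ℝ)
        = (((μ.card + m).factorial : ℕ) : ℝ) := by
      exact_mod_cast Nat.factorial_mul_ascFactorial μ.card m
    have hd : (((μ.card + m).descFactorial μ.card : ℕ) : ℝ)
        = (((μ.card + m).factorial : ℕ) : ℝ) / (m.factorial : ℝ) := by
      rw [eq_div_iff hm]
      linarith [h1]
    have hA : (((μ.card + 1).ascFactorial m : ℕ) : ℝ)
        = (((μ.card + m).factorial : ℕ) : ℝ) / (μ.card.factorial : ℝ) := by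
      rw [eq_div_iff hk]
      linarith [h2]
    rw [hd, hA, ascC, pow_add]
    field_simp
  -- the binomial series
  have hta : (0:ℝ) < t + μ.card := by
    have : (0:ℝ) ≤ μ.card := Nat.cast_nonneg μ.card
    linarith
  have hb : Summable (fun m : ℕ => ascC (t + μ.card) m * ξ ^ m) :=
    summable_asc hta hξ0.le hξ1
  have hbsum : ascS (t + μ.card) ξ * (1 - ξ) ^ (t + (μ.card : ℝ)) = 1 :=
    binom_main hta hξ0.le hξ1
  -- the sigma equivalence
  let e : G P ≃ (Σ n : ℕ, {l : Finset P // l ∈ levF hLF n}) :=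
    { toFun := fun l => ⟨l.1.card, ⟨l.1, mem_levF.mpr ⟨l.2, rfl⟩⟩⟩
      invFun := fun p => ⟨p.2.1, (mem_levF.mp p.2.2).1⟩
      left_inv := fun l => rfl
      right_inv := by
        rintro ⟨n, l, hl⟩
        have h := (mem_levF.mp hl).2
        subst h
        rfl }
  set F : (Σ n : ℕ, {l : Finset P // l ∈ levF hLF n}) → ℝ :=
    fun p => Pstar κ μ p.2.1 * Mxi κ q t ξ p.2.1 with hFdef
  have hF0 : ∀ p, 0 ≤ F p := by
    intro p
    obtain ⟨hI, -⟩ := mem_levF.mp p.2.2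
    have h1 : 0 ≤ Pstar κ μ p.2.1 :=
      div_nonneg (mul_nonneg (Nat.cast_nonneg _) (dimI_nonneg hκ _ _))
        (dimT_pos hκ hI).le
    have h2 : 0 ≤ Mxi κ q t ξ p.2.1 := by
      refine mul_nonneg (mul_nonneg (mul_nonneg ?_ ?_) ?_) ?_
      · exact Real.rpow_nonneg (by linarith) t
      · positivity
      · positivity
      · exact Finset.prod_nonneg fun x _ => sq_nonneg _
    exact mul_nonneg h1 h2
  have hfiber : ∀ n : ℕ, ∑' (c : {l : Finset P // l ∈ levF hLF n}), F ⟨n, c⟩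
      = ∑ l ∈ levF hLF n, Pstar κ μ l * Mxi κ q t ξ l := by
    intro n
    rw [tsum_fintype]
    exact Finset.sum_coe_sort (levF hLF n) (fun l => Pstar κ μ l * Mxi κ q t ξ l)
  -- summability of the level sums
  have haS : Summable (fun n : ℕ => ∑ l ∈ levF hLF n, Pstar κ μ l * Mxi κ q t ξ l) := by
    refine (summable_nat_add_iff μ.card).mp ?_
    refine (hb.mul_left ((1 - ξ) ^ t * (∏ x ∈ μ, q x ^ 2) * dimT κ μ * ξ ^ μ.card
        / (μ.card.factorial : ℝ))).congr fun m => ?_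
    rw [Nat.add_comm m μ.card]
    exact (hlev2 m).symm
  have hbig : Summable F := by
    rw [summable_sigma_of_nonneg hF0]
    constructor
    · intro n
      exact Summable.of_finite
    · exact haS.congr fun n => (hfiber n).symm
  constructor
  · exact e.symm.summable_iff.mp hbig
  · have htot : ∑' l : G P, Pstar κ μ l.1 * Mxi κ q t ξ l.1 = ∑' p, F p :=
      (e.symm.tsum_eq (fun l : G P => Pstar κ μ l.1 * Mxi κ q t ξ l.1)).symm
    rw [htot, Summable.tsum_sigma hbig, tsum_congr hfiber]
    have hsplitsum := Summable.sum_add_tsum_nat_add μ.card haS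
    rw [← hsplitsum]
    have hzero : ∀ i ∈ Finset.range μ.card,
        ∑ l ∈ levF hLF i, Pstar κ μ l * Mxi κ q t ξ l = 0 := by
      intro i hi
      refine Finset.sum_eq_zero fun l hl => ?_
      obtain ⟨-, hlc⟩ := mem_levF.mp hl
      rw [Pstar, hlc, Nat.descFactorial_eq_zero_iff_lt.mpr (Finset.mem_range.mp hi)]
      simp
    rw [Finset.sum_eq_zero hzero, zero_add]
    have htail : ∑' m : ℕ, ∑ l ∈ levF hLF (m + μ.card), Pstar κ μ l * Mxi κ q t ξ l
        = ((1 - ξ) ^ t * (∏ x ∈ μ, q x ^ 2) * dimT κ μ * ξ ^ μ.card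
            / (μ.card.factorial : ℝ)) * ascS (t + μ.card) ξ := by
      rw [ascS, ← tsum_mul_left]
      refine tsum_congr fun m => ?_
      rw [Nat.add_comm m μ.card]
      exact hlev2 m
    rw [htail]
    -- final algebra
    have hsplit : (1 - ξ) ^ (t + (μ.card : ℝ))
        = (1 - ξ) ^ t * (1 - ξ) ^ (μ.card : ℕ) := by
      rw [Real.rpow_add h1ξ, Real.rpow_natCast]
    have hS : ascS (t + μ.card) ξ * ((1 - ξ) ^ t * (1 - ξ) ^ (μ.card : ℕ)) = 1 := by
      rw [← hsplit]; exact hbsum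
    have hA1 : (0:ℝ) < (1 - ξ) ^ t := Real.rpow_pos_of_pos h1ξ t
    have hA2 : (0:ℝ) < (1 - ξ) ^ (μ.card : ℕ) := pow_pos h1ξ μ.card
    have hval : ascS (t + μ.card) ξ
        = 1 / ((1 - ξ) ^ t * (1 - ξ) ^ (μ.card : ℕ)) := by
      rw [eq_div_iff (by positivity)]
      exact hS
    have hk : ((μ.card.factorial : ℝ)) ≠ 0 := by
      exact_mod_cast Nat.factorial_ne_zero μ.card
    rw [hval, div_pow]
    field_simp

end IdealGraph
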